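/- (Non-exactness of the relaxations, linear case) Let G(x) = A_0 + x_1 A_1 + ... + x_n A_n with A_0,...,A_n q×q symmetric real matrices, K = {x ∈ ℝ^n : G(x) ⪰ 0}, f ∈ ℝ[x_1,...,x_n], and f* = min_{x ∈ K} f(x) attained at a minimizer u* ∈ K. Suppose there exists a point u ∈ K with f(u) > f* such that Null(G(u*)) ⊆ Null(G(u)). Then there exist no m ∈ ℕ, real λ_0 ≥ 0, and positive semidefinite real matrices Λ_k of size q^k × q^k (k = 1,...,m) with f(x) − f* = λ_0 + Σ_{k=1}^m ⟨Λ_k, G(x)^{⊗k}⟩; that is, f − f* ∉ H(G). In particular, if G(u*) is positive definite then no such representation exists. -/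

import Mathlib

open scoped BigOperators

noncomputable section

/-- The `k`-fold Kronecker power of a matrix, with rows and columns indexed by
functions `Fin k → ι` (a type of cardinality `(#ι)^k`):
`(M^{⊗k})_{a,b} = ∏ᵢ M_{a i, b i}`. -/
def kronPow {ι : Type*} {R : Type*} [CommMonoid R] (M : Matrix ι ι R) (k : ℕ) :
    Matrix (Fin k → ι) (Fin k → ι) R :=
  Matrix.of fun a b => ∏ i, M (a i) (b i)

/-- Trace inner product `⟨Λ, B⟩ = tr(Λᵀ B) = ∑ᵢⱼ Λᵢⱼ Bᵢⱼ` of a real matrix against a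
polynomial matrix. -/
def tipP {n : ℕ} {ι : Type*} [Fintype ι] (Λ : Matrix ι ι ℝ)
    (B : Matrix ι ι (MvPolynomial (Fin n) ℝ)) : MvPolynomial (Fin n) ℝ :=
  ∑ i, ∑ j, MvPolynomial.C (Λ i j) * B i j

/-- The cone `H(G)` of all polynomials of the form
`λ₀ + ∑_{k=1}^m ⟨Λ_k, G(x)^{⊗k}⟩` with `λ₀ ≥ 0` and each `Λ_k` positive semidefinite. -/
def Hset {n : ℕ} {ι : Type*} [Fintype ι]
    (G : Matrix ι ι (MvPolynomial (Fin n) ℝ)) : Set (MvPolynomial (Fin n) ℝ) :=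
  { p | ∃ (m : ℕ) (lam0 : ℝ) (Λ : (k : ℕ) → Matrix (Fin k → ι) (Fin k → ι) ℝ),
      0 ≤ lam0 ∧ (∀ k ∈ Finset.Icc 1 m, (Λ k).PosSemidef) ∧
      p = MvPolynomial.C lam0 + ∑ k ∈ Finset.Icc 1 m, tipP (Λ k) (kronPow G k) }

/-- The linear polynomial matrix `G(x) = A₀ + ∑ₗ xₗ Aₗ`. -/
def linMat {n q : ℕ} (A0 : Matrix (Fin q) (Fin q) ℝ)
    (A : Fin n → Matrix (Fin q) (Fin q) ℝ) :
    Matrix (Fin q) (Fin q) (MvPolynomial (Fin n) ℝ) :=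
  Matrix.of fun i j =>
    MvPolynomial.C (A0 i j) + ∑ l, MvPolynomial.X l * MvPolynomial.C (A l i j)

/-- Entrywise evaluation of a polynomial matrix at a point `x`. -/
def evalMat {n : ℕ} {ι : Type*} (x : Fin n → ℝ)
    (B : Matrix ι ι (MvPolynomial (Fin n) ℝ)) : Matrix ι ι ℝ :=
  Matrix.of fun i j => MvPolynomial.eval x (B i j)

set_option linter.unusedSectionVars false

section Aux
open Matrix

variable {ι κ : Type*} [Fintype ι] [Fintype κ]

theorem Matrix.posSemidef_iff_eq_transpose_mul_self {A : Matrix ι ι ℝ} :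
    A.PosSemidef ↔ ∃ B : Matrix ι ι ℝ, A = Bᴴ * B := by
  classical
  open scoped MatrixOrder in
  constructor
  · intro h
    refine ⟨CFC.sqrt A, ?_⟩
    rw [← Matrix.star_eq_conjTranspose, (CFC.sqrt_nonneg A).isSelfAdjoint.star_eq, CFC.sqrt_mul_sqrt_self A h.nonneg]
  · rintro ⟨B, rfl⟩
    exact Matrix.posSemidef_conjTranspose_mul_self B

/-- Kronecker product of real matrices, explicit. -/
def kron (M : Matrix ι ι ℝ) (N : Matrix κ κ ℝ) : Matrix (ι × κ) (ι × κ) ℝ :=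
  Matrix.of fun p r => M p.1 r.1 * N p.2 r.2

theorem kron_posSemidef [DecidableEq ι] [DecidableEq κ] {M : Matrix ι ι ℝ} {N : Matrix κ κ ℝ}
    (hM : M.PosSemidef) (hN : N.PosSemidef) : (kron M N).PosSemidef := by
  obtain ⟨C, hC⟩ := Matrix.posSemidef_iff_eq_transpose_mul_self.mp hM
  obtain ⟨D, hD⟩ := Matrix.posSemidef_iff_eq_transpose_mul_self.mp hN
  have : kron M N = (kron C D)ᴴ * (kron C D) := by
    ext p r
    simp only [kron, Matrix.mul_apply, Matrix.conjTranspose_apply, Matrix.of_apply,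
      Fintype.sum_prod_type, star_trivial, hC, hD]
    rw [Finset.sum_mul_sum]
    apply Finset.sum_congr rfl; intro a _
    apply Finset.sum_congr rfl; intro b _
    ring
  rw [this]
  exact Matrix.posSemidef_conjTranspose_mul_self _


theorem kronPow_succ {M : Matrix ι ι ℝ} (k : ℕ) :
    kronPow M (k + 1) =
      (kron M (kronPow M k)).submatrix (fun a => (a 0, fun i => a i.succ))
        (fun a => (a 0, fun i => a i.succ)) := by
  ext a b
  simp only [kronPow, kron, Matrix.submatrix_apply, Matrix.of_apply]
  rw [Fin.prod_univ_succ]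

theorem kronPow_zero_posSemidef (M : Matrix ι ι ℝ) : (kronPow M 0).PosSemidef := by
  refine Matrix.PosSemidef.of_dotProduct_mulVec_nonneg ?_ ?_
  · ext a b; simp [kronPow, Matrix.conjTranspose_apply]
  · intro x
    have : (kronPow M 0) *ᵥ x = fun _ => ∑ b, x b := by
      ext a; simp [kronPow, Matrix.mulVec, dotProduct]
    rw [this]
    simp only [star_trivial, dotProduct]
    rw [← Finset.sum_mul]
    exact mul_self_nonneg _

theorem kronPow_posSemidef [DecidableEq ι] {M : Matrix ι ι ℝ} (hM : M.PosSemidef) (k : ℕ) :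
    (kronPow M k).PosSemidef := by
  induction k with
  | zero => exact kronPow_zero_posSemidef M
  | succ k ih =>
    rw [kronPow_succ]
    exact (kron_posSemidef hM ih).submatrix _

theorem kron_sub_add (Ma Mb : Matrix ι ι ℝ) (Na Nb : Matrix κ κ ℝ) :
    kron Ma Na - kron Mb Nb = kron Ma (Na - Nb) + kron (Ma - Mb) Nb := by
  ext p r
  simp only [kron, Matrix.sub_apply, Matrix.add_apply, Matrix.of_apply]
  ring

theorem kron_smul_smul (c d : ℝ) (M : Matrix ι ι ℝ) (N : Matrix κ κ ℝ) :
    kron (c • M) (d • N) = (c * d) • kron M N := by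
  ext p r
  simp only [kron, Matrix.smul_apply, Matrix.of_apply, smul_eq_mul]
  ring

theorem posSemidef_smul {M : Matrix ι ι ℝ} (hM : M.PosSemidef) {c : ℝ} (hc : 0 ≤ c) :
    (c • M).PosSemidef := by
  refine Matrix.PosSemidef.of_dotProduct_mulVec_nonneg ?_ ?_
  · unfold Matrix.IsHermitian at *
    rw [Matrix.conjTranspose_smul, hM.1, star_trivial]
  · intro x
    rw [Matrix.smul_mulVec, dotProduct_smul, smul_eq_mul]
    exact mul_nonneg hc (hM.dotProduct_mulVec_nonneg x)

theorem kronPow_smul_sub_posSemidef [DecidableEq ι] {P B : Matrix ι ι ℝ} {c : ℝ}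
    (hP : P.PosSemidef) (hB : B.PosSemidef) (hc : 0 ≤ c)
    (hd : (c • P - B).PosSemidef) (k : ℕ) :
    (c ^ k • kronPow P k - kronPow B k).PosSemidef := by
  induction k with
  | zero =>
    have : c ^ 0 • kronPow P 0 - kronPow B 0 = 0 := by
      have : kronPow P 0 = kronPow B 0 := by ext a b; simp [kronPow]
      rw [pow_zero, one_smul, this, sub_self]
    rw [this]
    exact Matrix.PosSemidef.zero
  | succ k ih =>
    have key : c ^ (k + 1) • kronPow P (k + 1) - kronPow B (k + 1) =
        (kron (c • P) (c ^ k • kronPow P k - kronPow B k)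
          + kron (c • P - B) (kronPow B k)).submatrix
          (fun a => (a 0, fun i => a i.succ)) (fun a => (a 0, fun i => a i.succ)) := by
      rw [← kron_sub_add, kronPow_succ, kronPow_succ]
      rw [kron_smul_smul]
      rw [← pow_succ']
      simp [Matrix.submatrix_sub, Matrix.submatrix_smul]
    rw [key]
    refine Matrix.PosSemidef.submatrix ?_ _
    exact Matrix.PosSemidef.add (kron_posSemidef (posSemidef_smul hP hc) ih)
      (kron_posSemidef hd (kronPow_posSemidef hB k))

def tip (Λ N : Matrix ι ι ℝ) : ℝ := ∑ i, ∑ j, Λ i j * N i j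

theorem tip_nonneg {Λ N : Matrix ι ι ℝ} (hΛ : Λ.PosSemidef) (hN : N.PosSemidef) :
    0 ≤ tip Λ N := by
  obtain ⟨C, hC⟩ := Matrix.posSemidef_iff_eq_transpose_mul_self.mp hΛ
  have hrot : ∀ g : ι → ι → ι → ℝ,
      (∑ i, ∑ j, ∑ t, g i j t) = ∑ t, ∑ i, ∑ j, g i j t := fun g =>
    (Finset.sum_congr rfl fun i _ => Finset.sum_comm).trans Finset.sum_comm
  have : tip Λ N = ∑ t, dotProduct (C t) (N *ᵥ (C t)) := by
    simp only [tip, hC, Matrix.mul_apply, Matrix.conjTranspose_apply, star_trivial,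
      dotProduct, Matrix.mulVec, Finset.sum_mul, Finset.mul_sum]
    rw [hrot]
    apply Finset.sum_congr rfl; intro t _
    apply Finset.sum_congr rfl; intro i _
    apply Finset.sum_congr rfl; intro j _
    ring
  rw [this]
  refine Finset.sum_nonneg fun t _ => ?_
  simpa using hN.dotProduct_mulVec_nonneg (C t)

theorem tip_sub (Λ S N : Matrix ι ι ℝ) : tip Λ (S - N) = tip Λ S - tip Λ N := by
  simp only [tip, Matrix.sub_apply, mul_sub, Finset.sum_sub_distrib]

theorem tip_smul (Λ N : Matrix ι ι ℝ) (c : ℝ) : tip Λ (c • N) = c * tip Λ N := by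
  simp only [tip, Matrix.smul_apply, smul_eq_mul, Finset.mul_sum]
  apply Finset.sum_congr rfl; intro i _
  apply Finset.sum_congr rfl; intro j _
  ring

theorem exists_quad_bound {B : Matrix ι ι ℝ} (hB : B.PosSemidef) :
    ∃ t : ℝ, 0 ≤ t ∧ ∀ w : ι → ℝ, w ⬝ᵥ (B *ᵥ w) ≤ t * (w ⬝ᵥ w) := by
  obtain ⟨C, hC⟩ := Matrix.posSemidef_iff_eq_transpose_mul_self.mp hB
  refine ⟨∑ i, ∑ j, C i j ^ 2, Finset.sum_nonneg fun i _ =>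
    Finset.sum_nonneg fun j _ => sq_nonneg _, fun w => ?_⟩
  have h1 : w ⬝ᵥ (B *ᵥ w) = (C *ᵥ w) ⬝ᵥ (C *ᵥ w) := by
    rw [hC, ← Matrix.mulVec_mulVec, Matrix.dotProduct_mulVec]
    congr 1
    have hCH : Cᴴ = Cᵀ := by ext i j; simp [Matrix.conjTranspose_apply]
    rw [hCH, Matrix.vecMul_transpose]
  rw [h1]
  have h2 : ∀ i, (C *ᵥ w) i * (C *ᵥ w) i ≤ (∑ j, C i j ^ 2) * (∑ j, w j ^ 2) := by
    intro i
    have := Finset.sum_mul_sq_le_sq_mul_sq Finset.univ (fun j => C i j) w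
    simpa [Matrix.mulVec, dotProduct, ← sq] using this
  calc (C *ᵥ w) ⬝ᵥ (C *ᵥ w) = ∑ i, (C *ᵥ w) i * (C *ᵥ w) i := rfl
    _ ≤ ∑ i, (∑ j, C i j ^ 2) * (∑ j, w j ^ 2) := Finset.sum_le_sum fun i _ => h2 i
    _ = (∑ i, ∑ j, C i j ^ 2) * (w ⬝ᵥ w) := by
        rw [← Finset.sum_mul]
        congr 1
        simp [dotProduct, sq]

theorem exists_smul_sub_posSemidef {ι : Type*} [Fintype ι] [DecidableEq ι]
    {P B : Matrix ι ι ℝ} (hP : P.PosSemidef) (hB : B.PosSemidef)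
    (hker : ∀ v : ι → ℝ, P *ᵥ v = 0 → B *ᵥ v = 0) :
    ∃ c : ℝ, 0 ≤ c ∧ (c • P - B).PosSemidef := by
  obtain ⟨t, ht0, htB⟩ := exists_quad_bound hB
  set lam := hP.1.eigenvalues with hlamdef
  have hlam0 : ∀ i, 0 ≤ lam i := hP.eigenvalues_nonneg
  set U : Matrix ι ι ℝ := (Matrix.IsHermitian.eigenvectorUnitary hP.1 : Matrix ι ι ℝ) with hUdef
  have hU1 : star U * U = 1 :=
    Matrix.mem_unitaryGroup_iff'.mp (Matrix.IsHermitian.eigenvectorUnitary hP.1).2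
  have hU2 : U * star U = 1 :=
    Matrix.mem_unitaryGroup_iff.mp (Matrix.IsHermitian.eigenvectorUnitary hP.1).2
  have hstarU : star U = Uᵀ := by
    ext i j
    simp [Matrix.star_apply, Matrix.transpose_apply]
  have hspec : P = U * Matrix.diagonal lam * star U := by
    have h := hP.1.spectral_theorem
    simpa [RCLike.ofReal_real_eq_id, Function.comp] using h
  -- the minimal positive eigenvalue
  set s : Finset ι := Finset.univ.filter (fun i => lam i ≠ 0) with hsdef
  set ε : ℝ := if h : s.Nonempty then s.inf' h lam else 1 with hεdef
  have hε : 0 < ε := by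
    rw [hεdef]
    split_ifs with h
    · rw [Finset.lt_inf'_iff]
      intro i hi
      rw [hsdef, Finset.mem_filter] at hi
      exact lt_of_le_of_ne (hlam0 i) (Ne.symm hi.2)
    · exact one_pos
  have hεle : ∀ i, lam i ≠ 0 → ε ≤ lam i := by
    intro i hi
    have hne : s.Nonempty := ⟨i, by simp [hsdef, hi]⟩
    rw [hεdef, dif_pos hne]
    exact Finset.inf'_le _ (by simp [hsdef, hi])
  refine ⟨t / ε, div_nonneg ht0 hε.le, ?_⟩
  -- key pointwise estimate
  have hPU : ∀ x : ι → ℝ, P *ᵥ (U *ᵥ x) = U *ᵥ (fun i => lam i * x i) := by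
    intro x
    rw [hspec, Matrix.mulVec_mulVec]
    have hstep : U * Matrix.diagonal lam * star U * U = U * Matrix.diagonal lam := by
      rw [mul_assoc (U * Matrix.diagonal lam) (star U) U, hU1, mul_one]
    rw [hstep, ← Matrix.mulVec_mulVec]
    have hd : Matrix.diagonal lam *ᵥ x = fun i => lam i * x i := by
      funext i; rw [Matrix.mulVec_diagonal]
    rw [hd]
  have hUdot : ∀ x y : ι → ℝ, (U *ᵥ x) ⬝ᵥ (U *ᵥ y) = x ⬝ᵥ y := by
    intro x y
    rw [Matrix.dotProduct_mulVec]
    have h1 : (U *ᵥ x) ᵥ* U = Uᵀ *ᵥ (U *ᵥ x) := (Matrix.mulVec_transpose U (U *ᵥ x)).symm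
    rw [h1, Matrix.mulVec_mulVec, ← hstarU, hU1, Matrix.one_mulVec]
  have key : ∀ v : ι → ℝ, v ⬝ᵥ (B *ᵥ v) ≤ (t / ε) * (v ⬝ᵥ (P *ᵥ v)) := by
    intro v
    set β : ι → ℝ := star U *ᵥ v with hβdef
    have hv : v = U *ᵥ β := by
      rw [hβdef, Matrix.mulVec_mulVec, hU2, Matrix.one_mulVec]
    set β' : ι → ℝ := fun i => if lam i = 0 then 0 else β i with hβ'def
    set w : ι → ℝ := U *ᵥ β' with hwdef
    have hlamββ' : (fun i => lam i * β i) = (fun i => lam i * β' i) := by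
      funext i
      rw [hβ'def]
      by_cases h : lam i = 0 <;> simp [h]
    have hPvw : P *ᵥ (v - w) = 0 := by
      rw [Matrix.mulVec_sub, hv, hwdef, hPU, hPU, hlamββ', sub_self]
    have hBv : B *ᵥ v = B *ᵥ w := by
      have := hker _ hPvw
      rw [Matrix.mulVec_sub, sub_eq_zero] at this
      exact this
    have hsym : (v - w) ⬝ᵥ (B *ᵥ w) = 0 := by
      rw [Matrix.dotProduct_mulVec]
      have hBt : Bᵀ = B := by
        ext i j
        have h := congrFun (congrFun hB.1 i) j
        simpa [Matrix.conjTranspose_apply] using h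
      have : (v - w) ᵥ* B = B *ᵥ (v - w) := by
        rw [← hBt, Matrix.vecMul_transpose, hBt]
      rw [this, hker _ hPvw, zero_dotProduct]
    have hquad : v ⬝ᵥ (B *ᵥ v) = w ⬝ᵥ (B *ᵥ w) := by
      rw [hBv]
      have : v ⬝ᵥ (B *ᵥ w) = (v - w) ⬝ᵥ (B *ᵥ w) + w ⬝ᵥ (B *ᵥ w) := by
        rw [← add_dotProduct, sub_add_cancel]
      rw [this, hsym, zero_add]
    have hww : w ⬝ᵥ w = β' ⬝ᵥ β' := by rw [hwdef, hUdot]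
    have hPv : v ⬝ᵥ (P *ᵥ v) = ∑ i, lam i * β i ^ 2 := by
      rw [hv, hPU, hUdot, dotProduct]
      apply Finset.sum_congr rfl; intro i _; ring
    have hβ'β : ε * (β' ⬝ᵥ β') ≤ ∑ i, lam i * β i ^ 2 := by
      rw [dotProduct, Finset.mul_sum]
      apply Finset.sum_le_sum
      intro i _
      rw [hβ'def]
      by_cases h : lam i = 0
      · simp [h]
      · simp only [h, if_false]
        rw [sq]
        have := hεle i h
        nlinarith [sq_nonneg (β i), mul_self_nonneg (β i)]
    have h1 : w ⬝ᵥ (B *ᵥ w) ≤ t * (β' ⬝ᵥ β') := by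
      rw [← hww]; exact htB w
    have h2 : t * (β' ⬝ᵥ β') ≤ (t / ε) * (∑ i, lam i * β i ^ 2) := by
      have := mul_le_mul_of_nonneg_left hβ'β (div_nonneg ht0 hε.le)
      calc t * (β' ⬝ᵥ β') = (t / ε) * (ε * (β' ⬝ᵥ β')) := by
            field_simp
          _ ≤ (t / ε) * (∑ i, lam i * β i ^ 2) := this
    rw [hquad, hPv]
    exact le_trans h1 h2
  refine Matrix.PosSemidef.of_dotProduct_mulVec_nonneg ?_ ?_
  · rw [Matrix.IsHermitian, Matrix.conjTranspose_sub, Matrix.conjTranspose_smul,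
      hP.1, hB.1, star_trivial]
  · intro x
    rw [star_trivial, Matrix.sub_mulVec, dotProduct_sub, Matrix.smul_mulVec,
      dotProduct_smul, smul_eq_mul, sub_nonneg]
    exact key x

end Aux

theorem eval_tipP {n : ℕ} {ι : Type*} [Fintype ι] (x : Fin n → ℝ) (Λ : Matrix ι ι ℝ)
    (M : Matrix ι ι (MvPolynomial (Fin n) ℝ)) :
    MvPolynomial.eval x (tipP Λ M) = tip Λ (evalMat x M) := by
  simp [tipP, tip, evalMat, map_sum]

theorem evalMat_kronPow {n : ℕ} {ι : Type*} [Fintype ι] (x : Fin n → ℝ)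
    (G : Matrix ι ι (MvPolynomial (Fin n) ℝ)) (k : ℕ) :
    evalMat x (kronPow G k) = kronPow (evalMat x G) k := by
  ext a b
  simp [evalMat, kronPow, map_prod]

/-- **Non-exactness of the relaxations (linear case).**
Let `K = {x : G(x) := A₀ + ∑ xₗ Aₗ ⪰ 0}`, let `f* = min_K f` be attained at `u* ∈ K`,
and suppose there is a nonoptimal point `u ∈ K` (`f(u) > f*`) with
`Null(G(u*)) ⊆ Null(G(u))`.  Then `f − f*` admits no representation
`λ₀ + ∑_{k=1}^m ⟨Λ_k, G(x)^{⊗k}⟩` with `λ₀ ≥ 0` and `Λ_k ⪰ 0`, i.e. `f − f* ∉ H(G)`. -/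
theorem relaxations_not_exact {n q : ℕ}
    (A0 : Matrix (Fin q) (Fin q) ℝ) (A : Fin n → Matrix (Fin q) (Fin q) ℝ)
    (hA0 : A0.IsSymm) (hA : ∀ l, (A l).IsSymm)
    (K : Set (Fin n → ℝ))
    (hK : K = {x | (evalMat x (linMat A0 A)).PosSemidef})
    (f : MvPolynomial (Fin n) ℝ) (fstar : ℝ) (ustar : Fin n → ℝ)
    (hustar : ustar ∈ K)
    (hval : MvPolynomial.eval ustar f = fstar)
    (hmin : ∀ x ∈ K, fstar ≤ MvPolynomial.eval x f)
    (u : Fin n → ℝ) (hu : u ∈ K)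
    (hnonopt : fstar < MvPolynomial.eval u f)
    (hnull : ∀ v : Fin q → ℝ,
      (evalMat ustar (linMat A0 A)).mulVec v = 0 →
      (evalMat u (linMat A0 A)).mulVec v = 0) :
    f - MvPolynomial.C fstar ∉ Hset (linMat A0 A) := by
  rintro ⟨m, lam0, Λ, hlam0, hΛ, heq⟩
  set P := evalMat ustar (linMat A0 A) with hPdef
  set Bm := evalMat u (linMat A0 A) with hBdef
  have hP : P.PosSemidef := by rw [hK] at hustar; exact hustar
  have hBpsd : Bm.PosSemidef := by rw [hK] at hu; exact hu
  obtain ⟨c, hc0, hcPB⟩ := exists_smul_sub_posSemidef hP hBpsd hnull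
  have heval : ∀ x : Fin n → ℝ,
      MvPolynomial.eval x f - fstar =
        lam0 + ∑ k ∈ Finset.Icc 1 m, tip (Λ k) (kronPow (evalMat x (linMat A0 A)) k) := by
    intro x
    have h := congrArg (MvPolynomial.eval x) heq
    simp only [map_sub, map_add, map_sum, MvPolynomial.eval_C, eval_tipP, evalMat_kronPow] at h
    exact h
  have h0 : lam0 + ∑ k ∈ Finset.Icc 1 m, tip (Λ k) (kronPow P k) = 0 := by
    have h := heval ustar
    rw [hval, sub_self] at h
    exact h.symm
  have hnonneg : ∀ k ∈ Finset.Icc 1 m, 0 ≤ tip (Λ k) (kronPow P k) := fun k hk =>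
    tip_nonneg (hΛ k hk) (kronPow_posSemidef hP k)
  have hsumnn : 0 ≤ ∑ k ∈ Finset.Icc 1 m, tip (Λ k) (kronPow P k) :=
    Finset.sum_nonneg hnonneg
  have hlam00 : lam0 = 0 := by linarith
  have hsum0 : ∑ k ∈ Finset.Icc 1 m, tip (Λ k) (kronPow P k) = 0 := by linarith
  have heach : ∀ k ∈ Finset.Icc 1 m, tip (Λ k) (kronPow P k) = 0 :=
    (Finset.sum_eq_zero_iff_of_nonneg hnonneg).mp hsum0
  have hBeach : ∀ k ∈ Finset.Icc 1 m, tip (Λ k) (kronPow Bm k) = 0 := by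
    intro k hk
    have hub : 0 ≤ tip (Λ k) (c ^ k • kronPow P k - kronPow Bm k) :=
      tip_nonneg (hΛ k hk) (kronPow_smul_sub_posSemidef hP hBpsd hc0 hcPB k)
    rw [tip_sub, tip_smul, heach k hk, mul_zero, zero_sub] at hub
    have hlb : 0 ≤ tip (Λ k) (kronPow Bm k) :=
      tip_nonneg (hΛ k hk) (kronPow_posSemidef hBpsd k)
    linarith
  have hu' := heval u
  rw [Finset.sum_congr rfl hBeach, Finset.sum_const_zero, hlam00, add_zero] at hu'
  linarith

end
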